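/- If μ ∈ Ω^l_𝔍 is a vector bundle form with associated map λ_μ and 𝔡 ∈ 𝔇E, then the contraction ι_𝔡μ is a vector bundle form in Ω^{l−1}_𝔍, and −ι_{𝕛(𝔡)}λ_μ is an associated map for it. -/
import Mathlib


structure VBDer (R E : Type*) [CommRing R] [Algebra ℝ R]
    [AddCommGroup E] [Module ℝ E] [Module R E] [IsScalarTower ℝ R E] where
  D : E →ₗ[ℝ] E
  X : Derivation ℝ R R
  leibniz : ∀ (r : R) (u : E), D (r • u) = X r • u + r • D u

namespace VBDer

variable {R E : Type*} [CommRing R] [Algebra ℝ R]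
  [AddCommGroup E] [Module ℝ E] [Module R E] [IsScalarTower ℝ R E]

theorem ext' {a b : VBDer R E} (hD : a.D = b.D) (hX : a.X = b.X) : a = b := by
  cases a; cases b; simp_all

instance : Zero (VBDer R E) := ⟨⟨0, 0, by simp⟩⟩

instance : Add (VBDer R E) :=
  ⟨fun a b => ⟨a.D + b.D, a.X + b.X, by
    intro r u
    simp only [LinearMap.add_apply, a.leibniz, b.leibniz, Derivation.add_apply, add_smul, smul_add]
    abel⟩⟩

instance : Neg (VBDer R E) :=
  ⟨fun a => ⟨-a.D, -a.X, by
    intro r u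
    simp only [LinearMap.neg_apply, a.leibniz, Derivation.neg_apply, neg_smul, smul_neg, neg_add]⟩⟩

@[simp] lemma zero_D : (0 : VBDer R E).D = 0 := rfl
@[simp] lemma zero_X : (0 : VBDer R E).X = 0 := rfl
@[simp] lemma add_D (a b : VBDer R E) : (a + b).D = a.D + b.D := rfl
@[simp] lemma add_X (a b : VBDer R E) : (a + b).X = a.X + b.X := rfl
@[simp] lemma neg_D (a : VBDer R E) : (-a).D = -a.D := rfl
@[simp] lemma neg_X (a : VBDer R E) : (-a).X = -a.X := rfl

instance : AddCommGroup (VBDer R E) where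
  add_assoc a b c := by refine ext' ?_ ?_ <;> simp [add_assoc]
  zero_add a := by refine ext' ?_ ?_ <;> simp
  add_zero a := by refine ext' ?_ ?_ <;> simp
  neg_add_cancel a := by refine ext' ?_ ?_ <;> simp
  add_comm a b := by refine ext' ?_ ?_ <;> simp [add_comm]
  nsmul := nsmulRec
  zsmul := zsmulRec

instance : SMul R (VBDer R E) :=
  ⟨fun r a => ⟨r • a.D, r • a.X, by
    intro s u
    simp only [LinearMap.smul_apply, a.leibniz, smul_add, Derivation.coe_smul, Pi.smul_apply,
      smul_assoc, smul_smul]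
    rw [mul_comm r s]⟩⟩

@[simp] lemma smul_D (r : R) (a : VBDer R E) : (r • a).D = r • a.D := rfl
@[simp] lemma smul_X (r : R) (a : VBDer R E) : (r • a).X = r • a.X := rfl

instance : Module R (VBDer R E) where
  one_smul a := by refine ext' ?_ ?_ <;> simp
  mul_smul r s a := by refine ext' ?_ ?_ <;> simp [mul_smul]
  smul_zero r := by refine ext' ?_ ?_ <;> simp
  smul_add r a b := by refine ext' ?_ ?_ <;> simp
  add_smul r s a := by refine ext' ?_ ?_ <;> simp [add_smul]
  zero_smul a := by refine ext' ?_ ?_ <;> simp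

end VBDer
namespace VBDer

variable {R E : Type*} [CommRing R] [Algebra ℝ R]
  [AddCommGroup E] [Module ℝ E] [Module R E] [IsScalarTower ℝ R E]

/-- The commutator bracket of derivations. -/
def bracket (a b : VBDer R E) : VBDer R E :=
  ⟨a.D ∘ₗ b.D - b.D ∘ₗ a.D, ⁅a.X, b.X⁆, by
    intro r u
    simp only [LinearMap.sub_apply, LinearMap.comp_apply, a.leibniz, b.leibniz, map_add,
      smul_add, smul_sub, Derivation.commutator_apply, sub_smul]
    abel⟩

/-- The identity derivation `Id_E = (id_E, 0)`. -/
def idE : VBDer R E := ⟨LinearMap.id, 0, by simp⟩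

/-- The derivation `(Φ, 0)` associated with an `R`-linear endomorphism `Φ` of `E`. -/
def ofEnd (Φ : E →ₗ[R] E) : VBDer R E :=
  ⟨LinearMap.restrictScalars ℝ Φ, 0, by intro r u; simp⟩

end VBDer

section Ops

variable {R E : Type*} [CommRing R] [Algebra ℝ R]
  [AddCommGroup E] [Module ℝ E] [Module R E] [IsScalarTower ℝ R E]

/-- Contraction `ι_x μ := μ(x, -, …, -)` of an `E`-valued form. -/
def iotaF {M : Type*} {k : ℕ} (x : M) (μ : (Fin (k + 1) → M) → E) :
    (Fin k → M) → E :=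
  fun v => μ (Fin.cons x v)

/-- Lie derivative of an `E`-valued form on `𝔇E` along a derivation. -/
def lieF {k : ℕ} (d : VBDer R E) (μ : (Fin k → VBDer R E) → E) :
    (Fin k → VBDer R E) → E :=
  fun v => d.D (μ v) - ∑ i, μ (Function.update v i (VBDer.bracket d (v i)))

/-- Lie derivative of an `E`-valued form on `Der(R)` along a derivation of `E`. -/
def lieDer {k : ℕ} (d : VBDer R E) (lam : (Fin k → Derivation ℝ R R) → E) :
    (Fin k → Derivation ℝ R R) → E :=
  fun X => d.D (lam X) - ∑ i, lam (Function.update X i ⁅d.X, X i⁆)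

/-- The index of the `(l-1)`-st element of a tuple indexed by `Fin (k+1)` after the
positions `i < j` have been removed. -/
def dIdx {k : ℕ} (i j : Fin (k + 1)) (l : Fin k) : Fin (k + 1) :=
  if (l : ℕ) - 1 < (i : ℕ) then ⟨(l : ℕ) - 1, by have := l.isLt; omega⟩
  else if (l : ℕ) < (j : ℕ) then ⟨(l : ℕ), by have := l.isLt; omega⟩
  else ⟨(l : ℕ) + 1, by have := l.isLt; omega⟩

/-- The tuple `([𝔡ᵢ, 𝔡ⱼ], 𝔡₀, …, 𝔡̂ᵢ, …, 𝔡̂ⱼ, …, 𝔡ₖ)`. -/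
def pairTuple {k : ℕ} (v : Fin (k + 1) → VBDer R E) (i j : Fin (k + 1)) :
    Fin k → VBDer R E :=
  fun l => if (l : ℕ) = 0 then VBDer.bracket (v i) (v j) else v (dIdx i j l)

/-- The de Rham (Chevalley–Eilenberg) differential of `E`-valued forms on `𝔇E`. -/
def dF {k : ℕ} (μ : (Fin k → VBDer R E) → E) : (Fin (k + 1) → VBDer R E) → E :=
  fun v =>
    (∑ i : Fin (k + 1), ((-1 : ℤ) ^ (i : ℕ)) • (v i).D (μ fun l => v (i.succAbove l))) +
      ∑ i : Fin (k + 1), ∑ j : Fin (k + 1),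
        if i < j then ((-1 : ℤ) ^ ((i : ℕ) + (j : ℕ))) • μ (pairTuple v i j) else 0

/-- The pull-back `𝕛*λ` of a form on `Der(R)` along the symbol map. -/
def jStar {k : ℕ} (lam : (Fin k → Derivation ℝ R R) → E) :
    (Fin k → VBDer R E) → E :=
  fun v => lam fun i => (v i).X

/-- `μ` is an `R`-multilinear alternating map. -/
def IsMultAlt (R : Type*) {E M : Type*} [CommRing R] [AddCommGroup E] [Module R E]
    [AddCommGroup M] [Module R M] {k : ℕ} (μ : (Fin k → M) → E) : Prop :=
  ∃ μ' : AlternatingMap R M E (Fin k), ⇑μ' = μ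

/-- `lam` is an associated map for `μ`, i.e. `μ((Φ,0), 𝔡₂, …) = Φ(λ(𝕛𝔡₂, …))`. -/
def IsAssoc {k : ℕ} (μ : (Fin (k + 1) → VBDer R E) → E)
    (lam : (Fin k → Derivation ℝ R R) → E) : Prop :=
  ∀ (Φ : E →ₗ[R] E) (v : Fin k → VBDer R E),
    μ (Fin.cons (VBDer.ofEnd Φ) v) = Φ (lam fun i => (v i).X)

/-- `μ` is a vector bundle form, i.e. an element of `Ω^{k+1}_𝔍`. -/
def IsVBForm {k : ℕ} (μ : (Fin (k + 1) → VBDer R E) → E) : Prop :=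
  IsMultAlt R μ ∧
    ∃ lam : (Fin k → Derivation ℝ R R) → E, IsMultAlt R lam ∧ IsAssoc μ lam

/-- The symbol map `𝔇E → Der(R)` is surjective. -/
def SymbolSurj (R E : Type*) [CommRing R] [Algebra ℝ R]
    [AddCommGroup E] [Module ℝ E] [Module R E] [IsScalarTower ℝ R E] : Prop :=
  ∀ X : Derivation ℝ R R, ∃ d : VBDer R E, d.X = X

/-- The higher Dorfman bracket on `ℰ_{n+1} = 𝔇E × Ω^{n+1}(𝔇E, E)`. -/
def Dorf {n : ℕ} (e₁ e₂ : VBDer R E × ((Fin (n + 1) → VBDer R E) → E)) :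
    VBDer R E × ((Fin (n + 1) → VBDer R E) → E) :=
  (VBDer.bracket e₁.1 e₂.1, lieF e₁.1 e₂.2 - iotaF e₂.1 (dF e₁.2))

/-- The symmetric pairing on `ℰ_{n+1} = 𝔇E × Ω^{n+1}(𝔇E, E)`. -/
noncomputable def pairingP {n : ℕ} (e₁ e₂ : VBDer R E × ((Fin (n + 1) → VBDer R E) → E)) :
    (Fin n → VBDer R E) → E :=
  (2⁻¹ : ℝ) • (iotaF e₁.1 e₂.2 + iotaF e₂.1 e₁.2)

end Ops

/-- The contraction `ι_𝔡 μ` of a vector bundle form `μ ∈ Ω^{k+2}_𝔍` with a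
derivation `𝔡` is a vector bundle form in `Ω^{k+1}_𝔍`, and `-ι_{𝕛(𝔡)} λ_μ` is an associated
map for it. -/
theorem contraction_vb_form (R E : Type*) [CommRing R] [Algebra ℝ R]
    [AddCommGroup E] [Module ℝ E] [Module R E] [IsScalarTower ℝ R E]
    (k : ℕ) (𝔡 : VBDer R E)
    (μ : (Fin (k + 2) → VBDer R E) → E) (hμ : IsMultAlt R μ)
    (lam : (Fin (k + 1) → Derivation ℝ R R) → E) (hlam : IsMultAlt R lam)
    (hassoc : IsAssoc μ lam) :
    IsVBForm (iotaF 𝔡 μ) ∧ IsAssoc (iotaF 𝔡 μ) (-(iotaF 𝔡.X lam)) := by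
  obtain ⟨μ', hμ'⟩ := hμ
  obtain ⟨lam', hlam'⟩ := hlam
  have key : IsAssoc (iotaF 𝔡 μ) (-(iotaF 𝔡.X lam)) := by
    intro Φ w
    have h1 : (Fin.cons 𝔡 (Fin.cons (VBDer.ofEnd Φ) w) : Fin (k + 2) → VBDer R E)
        = (Fin.cons (VBDer.ofEnd Φ) (Fin.cons 𝔡 w)) ∘ Equiv.swap 0 1 := by
      funext i
      refine Fin.cases ?_ (fun j => ?_) i
      · simp [Equiv.swap_apply_left]
      · refine Fin.cases ?_ (fun l => ?_) j
        · have : (Fin.succ 0 : Fin (k + 2)) = 1 := rfl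
          simp [this, Equiv.swap_apply_right]
        · have h0 : (l.succ.succ : Fin (k + 2)) ≠ 0 := Fin.succ_ne_zero _
          have h1' : (l.succ.succ : Fin (k + 2)) ≠ 1 := by
            intro h
            have : l.succ = 0 := Fin.succ_injective _ h
            exact Fin.succ_ne_zero _ this
          simp [Function.comp, Equiv.swap_apply_of_ne_of_ne h0 h1']
    have h2 : (fun i => ((Fin.cons 𝔡 w : Fin (k + 1) → VBDer R E) i).X)
        = Fin.cons 𝔡.X (fun i => (w i).X) := by
      funext i
      refine Fin.cases rfl (fun j => rfl) i
    calc iotaF 𝔡 μ (Fin.cons (VBDer.ofEnd Φ) w)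
        = μ' ((Fin.cons (VBDer.ofEnd Φ) (Fin.cons 𝔡 w)) ∘ Equiv.swap 0 1) := by
          show μ _ = _
          rw [← hμ', h1]
      _ = -μ' (Fin.cons (VBDer.ofEnd Φ) (Fin.cons 𝔡 w)) := μ'.map_swap _ Fin.zero_ne_one
      _ = -μ (Fin.cons (VBDer.ofEnd Φ) (Fin.cons 𝔡 w)) := by rw [hμ']
      _ = -Φ (lam fun i => ((Fin.cons 𝔡 w : Fin (k + 1) → VBDer R E) i).X) := by
          rw [hassoc]
      _ = Φ ((-(iotaF 𝔡.X lam)) fun i => (w i).X) := by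
          rw [h2, Pi.neg_apply, map_neg]
          rfl
  refine ⟨⟨⟨μ'.curryLeft 𝔡, ?_⟩, -(iotaF 𝔡.X lam), ⟨-(lam'.curryLeft 𝔡.X), ?_⟩, key⟩, key⟩
  · funext v
    simp only [AlternatingMap.curryLeft_apply_apply, iotaF, ← hμ']
    rfl
  · funext X
    simp only [AlternatingMap.coe_neg, Pi.neg_apply,
      AlternatingMap.curryLeft_apply_apply, iotaF, ← hlam']
    rfl
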